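/- Let ψ₀ be a SIC fiducial vector in odd dimension d with generalised parity operator P_θ, let F be a 2×2 matrix over ℤ/dℤ, and set F' = H^{−1}FH where H = [[1,0],[0,2^{−1}]]. Suppose U is a unitary on ℂ^{ℤ/dℤ} satisfying U D_p U† = D_{Fp} for all p ∈ (ℤ/dℤ)² and U ψ₀ = c·ψ₀ for some scalar c ∈ ℂ, and suppose V is a unitary satisfying V D_p V† = D_{F'p} for all p. Then V commutes with the generalised parity operator: V P_θ = P_θ V. -/

import Mathlib

open Matrix Complex

/-- `τ = -exp(iπ/d)`. -/
noncomputable def tau (d : ℕ) : ℂ := -Complex.exp (Real.pi * Complex.I / d)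

/-- The displacement operator `D_p = D_{i,j}`, with `(r,s)` entry
`τ^{ij+2js} δ_{r,s+i}` (exponents of the `d`-th root of unity `τ` taken mod `d`). -/
noncomputable def Disp (d : ℕ) [NeZero d] (p : ZMod d × ZMod d) :
    Matrix (ZMod d) (ZMod d) ℂ :=
  Matrix.of fun r s =>
    tau d ^ ((p.1 * p.2 + 2 * p.2 * s).val) * (if r = s + p.1 then 1 else 0)

/-- The standard Hermitian inner product `⟨x, y⟩`, antilinear in the first slot. -/
noncomputable def cInner {n : Type*} [Fintype n] (x y : n → ℂ) : ℂ :=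
  ∑ k, star (x k) * y k

/-- The action of a 2×2 matrix over `ℤ/dℤ` on a label vector `p ∈ (ℤ/dℤ)²`. -/
def matAct (d : ℕ) [NeZero d] (F : Matrix (Fin 2) (Fin 2) (ZMod d))
    (p : ZMod d × ZMod d) : ZMod d × ZMod d :=
  (F 0 0 * p.1 + F 0 1 * p.2, F 1 0 * p.1 + F 1 1 * p.2)

/-- The matrix `H = [[1,0],[0,2⁻¹]]` over `ℤ/dℤ`. -/
def Hmat (d : ℕ) [NeZero d] : Matrix (Fin 2) (Fin 2) (ZMod d) :=
  !![1, 0; 0, (2 : ZMod d)⁻¹]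

/-- `Hp = (i, 2⁻¹j)` for `p = (i,j)`. -/
def Hmap (d : ℕ) [NeZero d] (p : ZMod d × ZMod d) : ZMod d × ZMod d :=
  (p.1, (2 : ZMod d)⁻¹ * p.2)

/-- The squared SIC overlap phase `e^{2iθ_q}`. -/
noncomputable def sqPhase (d : ℕ) [NeZero d] (ψ₀ : ZMod d → ℂ)
    (q : ZMod d × ZMod d) : ℂ :=
  if q = 0 then 1 else ((d : ℂ) + 1) * (cInner ψ₀ ((Disp d q).mulVec ψ₀)) ^ 2

/-- The generalised parity operator `P_θ = (1/d)·Σ_p e^{2iθ_{Hp}} D_{-p}`. -/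
noncomputable def genParity (d : ℕ) [NeZero d] (ψ₀ : ZMod d → ℂ) :
    Matrix (ZMod d) (ZMod d) ℂ :=
  ((d : ℂ)⁻¹) • ∑ p : ZMod d × ZMod d, sqPhase d ψ₀ (Hmap d p) • Disp d (-p)

lemma tau_ne_zero (d : ℕ) : tau d ≠ 0 := by
  simp [tau, Complex.exp_ne_zero]

lemma tau_eq_exp (d : ℕ) (hd : d ≠ 0) :
    tau d = Complex.exp ((Real.pi : ℂ) * I * (d + 1) / d) := by
  have hdc : (d : ℂ) ≠ 0 := Nat.cast_ne_zero.mpr hd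
  rw [show ((Real.pi : ℂ) * I * (d + 1) / d) = (Real.pi : ℂ) * I + Real.pi * I / d by
    field_simp]
  rw [Complex.exp_add, Complex.exp_pi_mul_I, tau]
  ring_nf

lemma tau_pow_d (d : ℕ) (hodd : Odd d) : tau d ^ d = 1 := by
  have hd : d ≠ 0 := by rintro rfl; simp at hodd
  have hdc : (d : ℂ) ≠ 0 := Nat.cast_ne_zero.mpr hd
  rw [tau_eq_exp d hd, ← Complex.exp_nat_mul]
  rw [show (d : ℂ) * ((Real.pi : ℂ) * I * (d + 1) / d) = ((d + 1 : ℕ) : ℂ) * (Real.pi * I) by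
    push_cast; field_simp]
  rw [Complex.exp_nat_mul, Complex.exp_pi_mul_I]
  exact Even.neg_one_pow (Odd.add_one hodd)

lemma dvd_of_tau_pow (d : ℕ) [NeZero d] {k : ℕ} (h : tau d ^ k = 1) : d ∣ k := by
  have hd : d ≠ 0 := NeZero.ne d
  have hdc : (d : ℂ) ≠ 0 := Nat.cast_ne_zero.mpr hd
  rw [tau_eq_exp d hd, ← Complex.exp_nat_mul] at h
  obtain ⟨n, hn⟩ := Complex.exp_eq_one_iff.mp h
  have hπI : (Real.pi : ℂ) * I ≠ 0 :=
    mul_ne_zero (by exact_mod_cast Real.pi_ne_zero) I_ne_zero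
  have h2 : (k : ℂ) * (d + 1) = n * 2 * d := by
    field_simp at hn
    -- hn : ↑k * (↑π * I * (↑d+1)) = ↑n * (2*↑π*I) * ↑d (approximately)
    apply mul_left_cancel₀ hπI
    linear_combination ((Real.pi : ℂ) * I) * hn
  have h3 : (k : ℤ) * (d + 1) = n * 2 * d := by exact_mod_cast h2
  have h4 : (d : ℤ) ∣ (k : ℤ) := by
    have : (d : ℤ) ∣ (k : ℤ) * (d + 1) := ⟨n * 2, by linarith⟩
    have h5 : (k : ℤ) * (d + 1) = k * d + k := by ring
    rw [h5] at this
    exact (Int.dvd_add_right ⟨k, by ring⟩).mp this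
  exact_mod_cast h4

lemma tau_val_inj (d : ℕ) [NeZero d] {a b : ZMod d}
    (h : tau d ^ a.val = tau d ^ b.val) : a = b := by
  have key : ∀ x y : ℕ, x < d → y ≤ x → tau d ^ x = tau d ^ y → x = y := by
    intro x y hx hyx he
    have h1 : tau d ^ y * tau d ^ (x - y) = tau d ^ y * 1 := by
      rw [← pow_add, Nat.add_sub_cancel' hyx, he, mul_one]
    have h2 : tau d ^ (x - y) = 1 := mul_left_cancel₀ (pow_ne_zero _ (tau_ne_zero d)) h1
    have h3 := dvd_of_tau_pow d h2
    have := Nat.eq_zero_of_dvd_of_lt h3 (by omega)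
    omega
  have ha := ZMod.val_lt a
  have hb := ZMod.val_lt b
  have : a.val = b.val := by
    rcases le_total b.val a.val with h' | h'
    · exact key _ _ ha h' h
    · exact (key _ _ hb h' h.symm).symm
  exact ZMod.val_injective d this

lemma disp_inj (d : ℕ) [NeZero d] (hodd : Odd d) : Function.Injective (Disp d) := by
  have h2 : IsUnit (2 : ZMod d) := by
    rw [show ((2 : ZMod d) = ((2 : ℕ) : ZMod d)) by push_cast; ring]
    exact (ZMod.isUnit_iff_coprime 2 d).mpr (Nat.coprime_two_left.mpr hodd)
  intro p q h
  have h1 : p.1 = q.1 := by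
    have e := congrFun (congrFun h p.1) 0
    by_contra hne
    simp only [Disp, Matrix.of_apply, zero_add, if_pos rfl, if_neg hne, if_true,
      mul_one, mul_zero] at e
    exact pow_ne_zero _ (tau_ne_zero d) e
  have h2entry : ∀ s : ZMod d,
      q.1 * p.2 + 2 * p.2 * s = q.1 * q.2 + 2 * q.2 * s := by
    intro s
    have e := congrFun (congrFun h (s + p.1)) s
    simp only [Disp, Matrix.of_apply, h1, if_pos rfl, if_true, mul_one] at e
    exact tau_val_inj d e
  have e0 := h2entry 0
  have e1 := h2entry 1
  simp only [mul_zero, add_zero, mul_one] at e0 e1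
  have : (2 : ZMod d) * p.2 = 2 * q.2 := by
    have := e1
    rw [e0] at this
    exact add_left_cancel this
  have hp2 : p.2 = q.2 := h2.mul_left_cancel this
  exact Prod.ext h1 hp2

lemma cInner_smul_left {n : Type*} [Fintype n] (a : ℂ) (x y : n → ℂ) :
    cInner (a • x) y = star a * cInner x y := by
  simp [cInner, Finset.mul_sum, mul_comm, mul_assoc, mul_left_comm]

lemma cInner_smul_right {n : Type*} [Fintype n] (a : ℂ) (x y : n → ℂ) :
    cInner x (a • y) = a * cInner x y := by
  simp [cInner, Finset.mul_sum, mul_comm, mul_assoc, mul_left_comm]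

lemma cInner_mulVec {n : Type*} [Fintype n] [DecidableEq n]
    (M : Matrix n n ℂ) (x y : n → ℂ) :
    cInner x (M.mulVec y) = cInner (Mᴴ.mulVec x) y := by
  simp only [cInner, Matrix.mulVec, dotProduct, Matrix.conjTranspose_apply,
    Finset.mul_sum, Finset.sum_mul, star_sum, star_mul', star_star]
  rw [Finset.sum_comm]
  apply Finset.sum_congr rfl
  intro i _
  apply Finset.sum_congr rfl
  intro j _
  ring

lemma matAct_zero (d : ℕ) [NeZero d] (F : Matrix (Fin 2) (Fin 2) (ZMod d)) :
    matAct d F 0 = 0 := by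
  simp [matAct]

lemma matAct_neg (d : ℕ) [NeZero d] (F : Matrix (Fin 2) (Fin 2) (ZMod d))
    (p : ZMod d × ZMod d) : matAct d F (-p) = -(matAct d F p) := by
  simp only [matAct, Prod.fst_neg, Prod.snd_neg, Prod.neg_mk, Prod.mk.injEq]
  constructor <;> ring

lemma matAct_mul (d : ℕ) [NeZero d] (A B : Matrix (Fin 2) (Fin 2) (ZMod d))
    (p : ZMod d × ZMod d) : matAct d (A * B) p = matAct d A (matAct d B p) := by
  simp only [matAct, Matrix.mul_apply, Fin.sum_univ_two, Prod.mk.injEq]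
  constructor <;> ring

lemma Hmap_eq (d : ℕ) [NeZero d] (p : ZMod d × ZMod d) :
    Hmap d p = matAct d (Hmat d) p := by
  simp [Hmap, Hmat, matAct]

lemma Hmat_mul_inv (d : ℕ) [NeZero d] (hodd : Odd d) :
    Hmat d * (Hmat d)⁻¹ = 1 := by
  have h2 : IsUnit (2 : ZMod d) := by
    rw [show ((2 : ZMod d) = ((2 : ℕ) : ZMod d)) by push_cast; ring]
    exact (ZMod.isUnit_iff_coprime 2 d).mpr (Nat.coprime_two_left.mpr hodd)
  apply Matrix.mul_nonsing_inv
  have : (Hmat d).det = (2 : ZMod d)⁻¹ := by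
    simp [Hmat, Matrix.det_fin_two_of]
  rw [this]
  exact IsUnit.of_mul_eq_one 2 (by rw [mul_comm]; exact ZMod.mul_inv_of_unit _ h2)

lemma matAct_inj_of_conj (d : ℕ) [NeZero d] (hodd : Odd d)
    (G : Matrix (Fin 2) (Fin 2) (ZMod d))
    (W : Matrix (ZMod d) (ZMod d) ℂ) (hW : W ∈ Matrix.unitaryGroup (ZMod d) ℂ)
    (h : ∀ p : ZMod d × ZMod d, W * Disp d p * Wᴴ = Disp d (matAct d G p)) :
    Function.Injective (matAct d G) := by
  have hW1 : Wᴴ * W = 1 := by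
    have := Matrix.mem_unitaryGroup_iff'.mp hW
    rwa [Matrix.star_eq_conjTranspose] at this
  intro p q hpq
  apply disp_inj d hodd
  have h2 : W * Disp d p * Wᴴ = W * Disp d q * Wᴴ := by rw [h, h, hpq]
  calc Disp d p = (Wᴴ * W) * Disp d p * (Wᴴ * W) := by rw [hW1]; simp
    _ = Wᴴ * (W * Disp d p * Wᴴ) * W := by noncomm_ring
    _ = Wᴴ * (W * Disp d q * Wᴴ) * W := by rw [h2]
    _ = (Wᴴ * W) * Disp d q * (Wᴴ * W) := by noncomm_ring
    _ = Disp d q := by rw [hW1]; simp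


/-- If a symplectic unitary `U` implementing `F` fixes the SIC fiducial `ψ₀`
up to a phase, then any unitary `V` implementing `F' = H⁻¹FH` commutes with
the generalised parity operator `P_θ`. -/
theorem symmetry_commutes_with_genParity
    (d : ℕ) [NeZero d] (hodd : Odd d) (hd : 3 ≤ d)
    (ψ₀ : ZMod d → ℂ)
    (hunit : cInner ψ₀ ψ₀ = 1)
    (hsic : ∀ p : ZMod d × ZMod d, p ≠ 0 →
      ‖cInner ψ₀ ((Disp d p).mulVec ψ₀)‖ ^ 2 = 1 / (d + 1))
    (F : Matrix (Fin 2) (Fin 2) (ZMod d))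
    (U : Matrix (ZMod d) (ZMod d) ℂ) (hU : U ∈ Matrix.unitaryGroup (ZMod d) ℂ)
    (hUD : ∀ p : ZMod d × ZMod d, U * Disp d p * Uᴴ = Disp d (matAct d F p))
    (c : ℂ) (hUψ : U.mulVec ψ₀ = c • ψ₀)
    (V : Matrix (ZMod d) (ZMod d) ℂ) (hV : V ∈ Matrix.unitaryGroup (ZMod d) ℂ)
    (hVD : ∀ p : ZMod d × ZMod d,
      V * Disp d p * Vᴴ = Disp d (matAct d ((Hmat d)⁻¹ * F * Hmat d) p)) :
    V * genParity d ψ₀ = genParity d ψ₀ * V := by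
  set F' : Matrix (Fin 2) (Fin 2) (ZMod d) := (Hmat d)⁻¹ * F * Hmat d with hF'
  -- unitarity facts
  have hU1 : Uᴴ * U = 1 := by
    have := Matrix.mem_unitaryGroup_iff'.mp hU
    rwa [Matrix.star_eq_conjTranspose] at this
  have hV1 : Vᴴ * V = 1 := by
    have := Matrix.mem_unitaryGroup_iff'.mp hV
    rwa [Matrix.star_eq_conjTranspose] at this
  -- |c| = 1
  have hcc : star c * c = 1 := by
    have h1 : cInner (U.mulVec ψ₀) (U.mulVec ψ₀) = cInner ψ₀ ψ₀ := by
      rw [cInner_mulVec, Matrix.mulVec_mulVec, hU1, Matrix.one_mulVec]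
    rw [hUψ, cInner_smul_left, cInner_smul_right, hunit] at h1
    rw [← h1]; ring
  -- Uᴴ ψ₀ = star c • ψ₀
  have hUconj : Uᴴ.mulVec ψ₀ = star c • ψ₀ := by
    have h1 : ψ₀ = c • Uᴴ.mulVec ψ₀ := by
      calc ψ₀ = (Uᴴ * U).mulVec ψ₀ := by rw [hU1, Matrix.one_mulVec]
        _ = Uᴴ.mulVec (U.mulVec ψ₀) := by rw [Matrix.mulVec_mulVec]
        _ = Uᴴ.mulVec (c • ψ₀) := by rw [hUψ]
        _ = c • Uᴴ.mulVec ψ₀ := Matrix.mulVec_smul _ _ _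
    conv_rhs => rw [h1, smul_smul, hcc, one_smul]
  -- invariance of overlaps
  have hinner : ∀ q : ZMod d × ZMod d,
      cInner ψ₀ ((Disp d (matAct d F q)).mulVec ψ₀)
        = cInner ψ₀ ((Disp d q).mulVec ψ₀) := by
    intro q
    rw [← hUD q, Matrix.mul_assoc, ← Matrix.mulVec_mulVec, ← Matrix.mulVec_mulVec,
      cInner_mulVec, hUconj, Matrix.mulVec_smul, cInner_smul_left, cInner_smul_right,
      star_star, ← mul_assoc, mul_comm c, hcc, one_mul]
  -- injectivity
  have hFinj : Function.Injective (matAct d F) :=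
    matAct_inj_of_conj d hodd F U hU hUD
  have hF'bij : Function.Bijective (matAct d F') :=
    Finite.injective_iff_bijective.mp (matAct_inj_of_conj d hodd F' V hV hVD)
  -- phase invariance
  have hF0 : ∀ q : ZMod d × ZMod d, matAct d F q = 0 ↔ q = 0 := by
    intro q
    constructor
    · intro h; exact hFinj (h.trans (matAct_zero d F).symm)
    · rintro rfl; exact matAct_zero d F
  have hphaseF : ∀ q : ZMod d × ZMod d,
      sqPhase d ψ₀ (matAct d F q) = sqPhase d ψ₀ q := by
    intro q
    unfold sqPhase
    rw [hinner q]
    simp only [hF0 q]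
  -- the H-relation: Hmap (F' p) = F (Hmap p)
  have hFH : ∀ p : ZMod d × ZMod d,
      Hmap d (matAct d F' p) = matAct d F (Hmap d p) := by
    intro p
    rw [Hmap_eq, Hmap_eq, ← matAct_mul, ← matAct_mul]
    congr 1
    rw [hF', ← Matrix.mul_assoc, ← Matrix.mul_assoc, Hmat_mul_inv d hodd, Matrix.one_mul]
  -- the key conjugation identity
  have key : V * genParity d ψ₀ * Vᴴ = genParity d ψ₀ := by
    unfold genParity
    rw [Matrix.mul_smul, Matrix.smul_mul]
    congr 1
    rw [Finset.mul_sum, Finset.sum_mul]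
    rw [← Function.Bijective.sum_comp hF'bij
      (fun q => sqPhase d ψ₀ (Hmap d q) • Disp d (-q))]
    apply Finset.sum_congr rfl
    intro p _
    rw [Matrix.mul_smul, Matrix.smul_mul, hVD, matAct_neg, hFH p, hphaseF]
  have hVV : V * Vᴴ = 1 := by
    have := Matrix.mem_unitaryGroup_iff.mp hV
    rwa [Matrix.star_eq_conjTranspose] at this
  calc V * genParity d ψ₀ = V * genParity d ψ₀ * (Vᴴ * V) := by
        rw [hV1, Matrix.mul_one]
    _ = (V * genParity d ψ₀ * Vᴴ) * V := by simp only [Matrix.mul_assoc]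
    _ = genParity d ψ₀ * V := by rw [key]
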